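/- W-like sufficiency: let Uᵢ, Ũᵢ (i = 0,1,2) be unitaries on ℂ² and |φᵢ⟩ unit vectors with ⟨φᵢ|(ŨᵢUᵢ)†(UᵢŨᵢ)|φᵢ⟩ = 0 for all i. Then the normalized vector proportional to (ŨU)₀⊗(UŨ)₁⊗(UŨ)₂ + (UŨ)₀⊗(ŨU)₁⊗(UŨ)₂ + (UŨ)₀⊗(UŨ)₁⊗(ŨU)₂ applied to |φ₀φ₁φ₂⟩ is local-unitarily equivalent to the W state (|100⟩+|010⟩+|001⟩)/√3, i.e. equals (W₀⊗W₁⊗W₂)|W⟩ for some single-qubit unitaries Wᵢ. -/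

import Mathlib

open Matrix Complex

noncomputable section

abbrev Q3 := Fin 2 × Fin 2 × Fin 2

def inner2 (u v : Fin 2 → ℂ) : ℂ := ∑ i, star (u i) * v i

def tens3 (a b c : Fin 2 → ℂ) : Q3 → ℂ := fun p => a p.1 * b p.2.1 * c p.2.2

def kron3 (A B C : Matrix (Fin 2) (Fin 2) ℂ) : Matrix Q3 Q3 ℂ :=
  Matrix.of fun p q => A p.1 q.1 * B p.2.1 q.2.1 * C p.2.2 q.2.2

/-- The three-qubit W state `(|100⟩+|010⟩+|001⟩)/√3`. -/
def w3 : Q3 → ℂ := fun p =>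
  ((Real.sqrt 3 : ℝ) : ℂ)⁻¹ *
    ((if p = (1, 0, 0) then 1 else 0) + (if p = (0, 1, 0) then 1 else 0) +
      (if p = (0, 0, 1) then 1 else 0))

/-- Unitaries preserve the standard inner product on `Fin 2 → ℂ`. -/
lemma inner2_mulVec {M : Matrix (Fin 2) (Fin 2) ℂ}
    (hM : M ∈ Matrix.unitaryGroup (Fin 2) ℂ) (u v : Fin 2 → ℂ) :
    inner2 (M.mulVec u) (M.mulVec v) = inner2 u v := by
  have h : star M * M = 1 := Matrix.mem_unitaryGroup_iff'.mp hM
  have h00 := congrFun (congrFun h 0) 0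
  have h01 := congrFun (congrFun h 0) 1
  have h10 := congrFun (congrFun h 1) 0
  have h11 := congrFun (congrFun h 1) 1
  simp [Matrix.mul_apply, Matrix.one_apply, Matrix.star_apply, Fin.sum_univ_succ] at h00 h01 h10 h11
  simp only [inner2, Matrix.mulVec, dotProduct, Fin.sum_univ_two, star_add, star_mul',
    Complex.star_def]
  linear_combination (starRingEnd ℂ (u 0) * v 0) * h00 + (starRingEnd ℂ (u 0) * v 1) * h01 +
    (starRingEnd ℂ (u 1) * v 0) * h10 + (starRingEnd ℂ (u 1) * v 1) * h11

/-- Kronecker product of matrices acts factorwise on tensor products of vectors. -/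
lemma kron3_mulVec (A B C : Matrix (Fin 2) (Fin 2) ℂ) (u v w : Fin 2 → ℂ) :
    (kron3 A B C).mulVec (tens3 u v w) = tens3 (A.mulVec u) (B.mulVec v) (C.mulVec w) := by
  funext p
  simp [kron3, tens3, Matrix.mulVec, dotProduct, Fintype.sum_prod_type, Fin.sum_univ_succ]
  ring

def ebasis (c : Fin 2) : Fin 2 → ℂ := fun r => if r = c then 1 else 0

lemma w3_eq : w3 = ((Real.sqrt 3 : ℝ) : ℂ)⁻¹ •
    (tens3 (ebasis 1) (ebasis 0) (ebasis 0) + tens3 (ebasis 0) (ebasis 1) (ebasis 0) +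
     tens3 (ebasis 0) (ebasis 0) (ebasis 1)) := by
  funext p
  obtain ⟨x, y, z⟩ := p
  fin_cases x <;> fin_cases y <;> fin_cases z <;>
    simp [w3, tens3, ebasis, Prod.ext_iff]

lemma mulVec_ebasis (M : Matrix (Fin 2) (Fin 2) ℂ) (c : Fin 2) :
    M.mulVec (ebasis c) = fun r => M r c := by
  funext r
  fin_cases c <;> simp [Matrix.mulVec, dotProduct, ebasis, Fin.sum_univ_two]

/-- under the orthogonality conditions, the normalized W-type switch output
`∝ ((ŨU)₀⊗(UŨ)₁⊗(UŨ)₂ + (UŨ)₀⊗(ŨU)₁⊗(UŨ)₂ + (UŨ)₀⊗(UŨ)₁⊗(ŨU)₂)|φ₀φ₁φ₂⟩` is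
local-unitarily equivalent to the W state. -/
theorem w_switch_output_LU_equivalent_W
    (U Ut : Fin 3 → Matrix (Fin 2) (Fin 2) ℂ)
    (hU : ∀ i, U i ∈ Matrix.unitaryGroup (Fin 2) ℂ)
    (hUt : ∀ i, Ut i ∈ Matrix.unitaryGroup (Fin 2) ℂ)
    (φ : Fin 3 → (Fin 2 → ℂ)) (hφ : ∀ i, inner2 (φ i) (φ i) = 1)
    (horth : ∀ i, inner2 ((Ut i * U i).mulVec (φ i)) ((U i * Ut i).mulVec (φ i)) = 0) :
    ∃ W : Fin 3 → Matrix (Fin 2) (Fin 2) ℂ,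
      (∀ i, W i ∈ Matrix.unitaryGroup (Fin 2) ℂ) ∧
      ((Real.sqrt 3 : ℝ) : ℂ)⁻¹ •
        ((kron3 (Ut 0 * U 0) (U 1 * Ut 1) (U 2 * Ut 2) +
          kron3 (U 0 * Ut 0) (Ut 1 * U 1) (U 2 * Ut 2) +
          kron3 (U 0 * Ut 0) (U 1 * Ut 1) (Ut 2 * U 2)).mulVec
            (tens3 (φ 0) (φ 1) (φ 2))) =
        (kron3 (W 0) (W 1) (W 2)).mulVec w3 := by
  set a : Fin 3 → (Fin 2 → ℂ) := fun i => (U i * Ut i).mulVec (φ i) with ha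
  set b : Fin 3 → (Fin 2 → ℂ) := fun i => (Ut i * U i).mulVec (φ i) with hb
  have haa : ∀ i, inner2 (a i) (a i) = 1 := fun i =>
    (inner2_mulVec (mul_mem (hU i) (hUt i)) _ _).trans (hφ i)
  have hbb : ∀ i, inner2 (b i) (b i) = 1 := fun i =>
    (inner2_mulVec (mul_mem (hUt i) (hU i)) _ _).trans (hφ i)
  have hba : ∀ i, inner2 (b i) (a i) = 0 := horth
  have hab : ∀ i, inner2 (a i) (b i) = 0 := by
    intro i
    have : inner2 (a i) (b i) = star (inner2 (b i) (a i)) := by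
      simp [inner2, Fin.sum_univ_two]; ring
    rw [this, hba i, star_zero]
  refine ⟨fun i => Matrix.of fun r c => if c = 0 then a i r else b i r, ?_, ?_⟩
  · intro i
    rw [Matrix.mem_unitaryGroup_iff']
    ext c c'
    have := haa i; have := hbb i; have := hba i; have := hab i
    simp only [inner2, Fin.sum_univ_two] at *
    fin_cases c <;> fin_cases c' <;>
      simp only [Matrix.mul_apply, Matrix.star_apply, Matrix.one_apply, Matrix.of_apply,
        Fin.sum_univ_two] <;>
      (clear hU hUt hφ horth haa hbb hba hab ha hb; simp [Fin.ext_iff] at * <;> assumption)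
  · have col0 : ∀ i : Fin 3, (Matrix.of fun r c => if c = 0 then a i r else b i r :
        Matrix (Fin 2) (Fin 2) ℂ).mulVec (ebasis 0) = a i := by
      intro i; rw [mulVec_ebasis]; funext r; simp
    have col1 : ∀ i : Fin 3, (Matrix.of fun r c => if c = 0 then a i r else b i r :
        Matrix (Fin 2) (Fin 2) ℂ).mulVec (ebasis 1) = b i := by
      intro i; rw [mulVec_ebasis]; funext r; simp
    rw [w3_eq, Matrix.mulVec_smul, Matrix.mulVec_add, Matrix.mulVec_add,
      kron3_mulVec, kron3_mulVec, kron3_mulVec, Matrix.add_mulVec, Matrix.add_mulVec,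
      kron3_mulVec, kron3_mulVec, kron3_mulVec]
    simp only [col0, col1]
    rfl
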